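/- Let (σ_u) be a family of Möbius involutions of the Riemann sphere with fixed points ζ(u) → 0 and with σ_u(α(u)) = ω(u), where α(u), ω(u) = o(ζ(u)) and α(u) ≠ ω(u). Then the coordinate change z ↦ ζ(u)/z conjugates σ_u to Möbius involutions that converge in PSL(2,ℂ) to the central symmetry w ↦ 2 − w; consequently, for every family z_u = c^{−1}ζ(u)(1+o(1)) with c ≠ 2, one has σ_u(z_u) = (2−c)^{−1}ζ(u)(1+o(1)). -/

import Mathlib

open Filter Asymptotics

/-- Let `σ_u(z) = (a(u)z + b(u))/(c(u)z + d(u))` be a family of nontrivial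
Möbius involutions (trace zero, nonzero determinant) with fixed points `ζ(u) → 0` and
`σ_u(α(u)) = ω(u)`, where `α(u), ω(u) = o(ζ(u))` and `α(u) ≠ ω(u)`. Then in the coordinate
`w = ζ(u)/z` the involutions converge pointwise to the central symmetry `w ↦ 2 − w`;
consequently, for every `c ≠ 0`, `c ≠ 2`, and every family `z_u = c⁻¹ζ(u)(1+o(1))`,
one has `σ_u(z_u) = (2−c)⁻¹ζ(u)(1+o(1))`. -/
theorem degenerating_involutions_central_symmetry {ι : Type*} (l : Filter ι)
    (a b cc d : ι → ℂ)
    (hdet : ∀ u, a u * d u - b u * cc u ≠ 0)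
    (htr : ∀ u, a u + d u = 0)
    (α ζ ω : ι → ℂ)
    (hfix : ∀ u, a u * ζ u + b u = ζ u * (cc u * ζ u + d u))
    (hmap : ∀ u, a u * α u + b u = ω u * (cc u * α u + d u))
    (hζ0 : Tendsto ζ l (nhds 0))
    (hαζ : α =o[l] ζ) (hωζ : ω =o[l] ζ)
    (hne : ∀ u, α u ≠ ω u) :
    (∀ w : ℂ, w ≠ 0 →
      Tendsto (fun u => ζ u /
          ((a u * (ζ u / w) + b u) / (cc u * (ζ u / w) + d u))) l (nhds (2 - w))) ∧
    (∀ c : ℂ, c ≠ 0 → c ≠ 2 → ∀ z : ι → ℂ,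
      (fun u => z u - c⁻¹ * ζ u) =o[l] ζ →
      (fun u => (a u * z u + b u) / (cc u * z u + d u) - (2 - c)⁻¹ * ζ u) =o[l] ζ) := by
  have hd : ∀ u, d u = -a u := fun u => by linear_combination htr u
  have hb : ∀ u, b u = cc u * ζ u ^ 2 - 2 * a u * ζ u := fun u => by
    linear_combination hfix u + ζ u * htr u
  have hkey : ∀ u, a u * (α u + ω u - 2 * ζ u) = cc u * (ω u * α u - ζ u ^ 2) := fun u => by
    linear_combination hmap u - hfix u + (ω u - ζ u) * htr u
  have hζne : ∀ᶠ u in l, ζ u ≠ 0 := by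
    filter_upwards [hαζ.def one_half_pos, hωζ.def one_half_pos] with u h1 h2 h0
    rw [h0, norm_zero, mul_zero] at h1 h2
    exact hne u ((norm_le_zero_iff.mp h1).trans (norm_le_zero_iff.mp h2).symm)
  have hε : Tendsto (fun u => α u / ζ u) l (nhds 0) := hαζ.tendsto_div_nhds_zero
  have hδ : Tendsto (fun u => ω u / ζ u) l (nhds 0) := hωζ.tendsto_div_nhds_zero
  have hprodT : Tendsto (fun u => (α u / ζ u) * (ω u / ζ u)) l (nhds 0) := by
    simpa using hε.mul hδ
  have hprod : ∀ᶠ u in l, (α u / ζ u) * (ω u / ζ u) - 1 ≠ 0 := by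
    filter_upwards [hprodT.eventually_ne (zero_ne_one)] with u h
    exact sub_ne_zero_of_ne h
  have ha : ∀ᶠ u in l, a u ≠ 0 := by
    filter_upwards [hζne, hprod] with u hz hp ha0
    have h1 : cc u * (ω u * α u - ζ u ^ 2) = 0 := by
      rw [← hkey u, ha0, zero_mul]
    have h2 : ω u * α u - ζ u ^ 2 ≠ 0 := by
      intro h
      apply hp
      rw [sub_eq_zero] at h ⊢
      field_simp
      linear_combination h
    have hcc0 : cc u = 0 := by
      rcases mul_eq_zero.mp h1 with h | h
      · exact h
      · exact absurd h h2
    exact hdet u (by rw [ha0, hcc0]; ring)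
  have ht : Tendsto (fun u => cc u * ζ u / a u) l (nhds 2) := by
    have hlim : Tendsto (fun u => (α u / ζ u + ω u / ζ u - 2) / ((α u / ζ u) * (ω u / ζ u) - 1))
        l (nhds 2) := by
      have := ((hε.add hδ).sub_const 2).div (hprodT.sub_const 1) (by norm_num)
      have h2 : ((0:ℂ) + 0 - 2) / (0 - 1) = 2 := by norm_num
      rw [h2] at this
      exact this
    refine hlim.congr' ?_
    filter_upwards [hζne, ha, hprod] with u hz hau hp
    rw [div_eq_div_iff hp hau]
    field_simp
    linear_combination hkey u
  constructor
  · intro w hw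
    have hDen : Tendsto (fun u => 1 + (cc u * ζ u / a u - 2) * w) l (nhds 1) := by
      have := ((ht.sub_const 2).mul_const w).const_add 1
      simpa using this
    have hD : ∀ᶠ u in l, 1 + (cc u * ζ u / a u - 2) * w ≠ 0 :=
      hDen.eventually_ne one_ne_zero
    have hlim : Tendsto (fun u => (cc u * ζ u / a u - w) / (1 + (cc u * ζ u / a u - 2) * w))
        l (nhds (2 - w)) := by
      have := (ht.sub_const w).div hDen one_ne_zero
      have h2 : ((2:ℂ) - w) / 1 = 2 - w := div_one _
      rw [h2] at this
      exact this
    refine hlim.congr' ?_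
    filter_upwards [hζne, ha, hD] with u hz hau hDu
    have hnum : a u * (ζ u / w) + b u = (a u * ζ u / w) * (1 + (cc u * ζ u / a u - 2) * w) := by
      rw [hb u]; field_simp
    have hnumne : a u * (ζ u / w) + b u ≠ 0 := by
      rw [hnum]
      exact mul_ne_zero (div_ne_zero (mul_ne_zero hau hz) hw) hDu
    rw [div_div_eq_mul_div, div_eq_div_iff hDu hnumne, hnum, hd u]
    field_simp
    ring
  · intro c hc0 hc2 z hz
    have hc2' : (2 : ℂ) - c ≠ 0 := sub_ne_zero_of_ne (Ne.symm hc2)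
    have hs : Tendsto (fun u => z u / ζ u) l (nhds c⁻¹) := by
      have h1 : Tendsto (fun u => (z u - c⁻¹ * ζ u) / ζ u + c⁻¹) l (nhds c⁻¹) := by
        have := hz.tendsto_div_nhds_zero.add_const c⁻¹
        simpa using this
      refine h1.congr' ?_
      filter_upwards [hζne] with u hzu
      field_simp
      ring
    have hden0 : (2 : ℂ) * c⁻¹ - 1 ≠ 0 := by
      intro h
      apply hc2
      field_simp at h
      linear_combination -h
    have hdenT : Tendsto (fun u => (cc u * ζ u / a u) * (z u / ζ u) - 1) l
        (nhds (2 * c⁻¹ - 1)) := (ht.mul hs).sub_const 1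
    have hdne : ∀ᶠ u in l, (cc u * ζ u / a u) * (z u / ζ u) - 1 ≠ 0 :=
      hdenT.eventually_ne hden0
    have hval : c⁻¹ / (2 * c⁻¹ - 1) = (2 - c)⁻¹ := by
      field_simp
    have hlim : Tendsto
        (fun u => (z u / ζ u + cc u * ζ u / a u - 2) / ((cc u * ζ u / a u) * (z u / ζ u) - 1)
          - (2 - c)⁻¹) l (nhds 0) := by
      have := (((hs.add ht).sub_const 2).div hdenT hden0).sub_const ((2 : ℂ) - c)⁻¹
      have heq : (c⁻¹ + 2 - 2) / (2 * c⁻¹ - 1) - (2 - c)⁻¹ = 0 := by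
        rw [add_sub_cancel_right, hval, sub_self]
      rw [heq] at this
      exact this
    rw [isLittleO_iff_tendsto' (hζne.mono fun u h h0 => absurd h0 h)]
    refine hlim.congr' ?_
    filter_upwards [hζne, ha, hdne] with u hzu hau hdu
    have hccz : cc u * z u + d u ≠ 0 := by
      intro h
      have h2 : cc u * z u = a u := by linear_combination h - hd u
      apply hdu
      have h3 : (cc u * ζ u / a u) * (z u / ζ u) = 1 := by
        field_simp
        linear_combination h2
      rw [h3, sub_self]
    have hcczζ : (cc u * z u + d u) * ζ u ≠ 0 := mul_ne_zero hccz hzu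
    have hmain : (z u / ζ u + cc u * ζ u / a u - 2) / ((cc u * ζ u / a u) * (z u / ζ u) - 1)
        = (a u * z u + b u) / (cc u * z u + d u) / ζ u := by
      rw [div_div, div_eq_div_iff hdu hcczζ, hd u, hb u]
      field_simp
      ring
    have hsplit : ((a u * z u + b u) / (cc u * z u + d u) - (2 - c)⁻¹ * ζ u) / ζ u
        = (a u * z u + b u) / (cc u * z u + d u) / ζ u - (2 - c)⁻¹ := by
      rw [sub_div, mul_div_assoc, div_self hzu, mul_one]
    rw [hsplit, ← hmain]
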